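/- For m>0 and ρ>0 let ν^{(m)}_ρ(n) = (1−φ)^{m/2} φ^n Γ(m/2+n)/(n! Γ(m/2)) with φ = ρ/(m/2+ρ), set p_m = 1 − ν^{(m)}_ρ(0) and κ_m = −1/(m log m) (for 0<m<1). For each m let η_1,η_2,… be i.i.d. with law ν^{(m)}_ρ and let Δ_{K} = ∑_{i=1}^{K}(1 − δ_{0,η_i}) be the number of non-empty sites among the first K, so that Δ_K has Binomial(K, p_m) distribution. Let K_m∈ℕ be given with K_m/κ_m → δ as m→0. Then: (i) if δ=0, Δ_{K_m} → 0 in distribution; (ii) if δ∈(0,∞), Δ_{K_m} converges in distribution to a Poisson random variable with mean δ/2; (iii) if K_m/κ_m → ∞, then Δ_{K_m}/(K_m p_m) → 1 in probability, and in particular Δ_{K_m} → ∞ in distribution. Here p_m satisfies p_m/( −(m/2)log m ) → 1 as m→0. -/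

import Mathlib

open Filter Topology
open scoped Classical

/-- The single-site marginal `ν^{(m)}_ρ(n) = (1−φ)^{m/2} φ^n Γ(m/2+n)/(n! Γ(m/2))`
with `φ = ρ/(m/2+ρ)` of the homogeneous stationary measure of the SIP at density `ρ`. -/
noncomputable def nuSIP (m ρ : ℝ) (n : ℕ) : ℝ :=
  (1 - ρ / (m / 2 + ρ)) ^ (m / 2) * (ρ / (m / 2 + ρ)) ^ n *
    Real.Gamma (m / 2 + n) / (n.factorial * Real.Gamma (m / 2))

/-- `p_m = 1 − ν^{(m)}_ρ(0)`, the probability that a site is non-empty. -/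
noncomputable def pSIP (m ρ : ℝ) : ℝ := 1 - nuSIP m ρ 0

/-- The scale `κ_m = −1/(m log m)`. -/
noncomputable def kappaScale (m : ℝ) : ℝ := -1 / (m * Real.log m)

/-- Binomial(K,p) probability of the value `n`. -/
noncomputable def binomPMF (K : ℕ) (p : ℝ) (n : ℕ) : ℝ :=
  (K.choose n : ℝ) * p ^ n * (1 - p) ^ (K - n)

/-! ### Auxiliary lemmas on `pSIP` -/

lemma pSIP_eq {ρ m : ℝ} (hρ : 0 < ρ) (hm : 0 < m) :
    pSIP m ρ = 1 - Real.exp (m / 2 * Real.log (m / 2 / (m / 2 + ρ))) := by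
  have h1 : (0:ℝ) < m / 2 + ρ := by positivity
  have h2 : 1 - ρ / (m / 2 + ρ) = m / 2 / (m / 2 + ρ) := by field_simp; ring
  have h3 : (0:ℝ) < m / 2 / (m / 2 + ρ) := by positivity
  have hG : Real.Gamma (m / 2) ≠ 0 := (Real.Gamma_pos_of_pos (by linarith)).ne'
  unfold pSIP nuSIP
  rw [h2]
  rw [Real.rpow_def_of_pos h3]
  simp [hG, mul_comm]

lemma pSIP_exponent_neg {ρ m : ℝ} (hρ : 0 < ρ) (hm : 0 < m) :
    m / 2 * Real.log (m / 2 / (m / 2 + ρ)) < 0 := by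
  have h1 : (0:ℝ) < m / 2 + ρ := by positivity
  apply mul_neg_of_pos_of_neg (by linarith)
  apply Real.log_neg (by positivity)
  rw [div_lt_one h1]; linarith

lemma pSIP_pos {ρ m : ℝ} (hρ : 0 < ρ) (hm : 0 < m) : 0 < pSIP m ρ := by
  rw [pSIP_eq hρ hm]
  have h := pSIP_exponent_neg hρ hm
  have : Real.exp (m / 2 * Real.log (m / 2 / (m / 2 + ρ))) < 1 := by
    rw [← Real.exp_zero]; exact Real.exp_lt_exp.mpr h
  linarith

lemma pSIP_lt_one {ρ m : ℝ} (hρ : 0 < ρ) (hm : 0 < m) : pSIP m ρ < 1 := by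
  rw [pSIP_eq hρ hm]
  have := Real.exp_pos (m / 2 * Real.log (m / 2 / (m / 2 + ρ)))
  linarith

lemma tendsto_exponent (ρ : ℝ) (hρ : 0 < ρ) :
    Tendsto (fun m : ℝ => m / 2 * Real.log (m / 2 / (m / 2 + ρ))) (𝓝[>] 0) (𝓝 0) := by
  have h1 : Tendsto (fun m : ℝ => m / 2) (𝓝[>] 0) (𝓝[>] 0) := by
    apply tendsto_nhdsWithin_of_tendsto_nhds_of_eventually_within
    · have : Tendsto (fun m : ℝ => m / 2) (𝓝[>] 0) (𝓝 ((0:ℝ)/2)) :=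
        (tendsto_id (α := ℝ)).div_const 2 |>.mono_left nhdsWithin_le_nhds
      simpa using this
    · filter_upwards [self_mem_nhdsWithin] with m (hm : 0 < m)
      exact half_pos hm
  have ha : Tendsto (fun m : ℝ => m / 2 * Real.log (m / 2)) (𝓝[>] 0) (𝓝 0) := by
    have := (tendsto_log_mul_rpow_nhdsGT_zero (r := 1) one_pos).comp h1
    simp only [Real.rpow_one, Function.comp_def] at this
    simpa [mul_comm] using this
  have hb : Tendsto (fun m : ℝ => m / 2 * Real.log (m / 2 + ρ)) (𝓝[>] 0) (𝓝 0) := by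
    have hcont : Tendsto (fun m : ℝ => Real.log (m / 2 + ρ)) (𝓝[>] 0) (𝓝 (Real.log ρ)) := by
      have : ContinuousAt (fun m : ℝ => Real.log (m / 2 + ρ)) 0 := by
        apply (Real.continuousAt_log (by simpa using hρ.ne')).comp
        fun_prop
      simpa using this.continuousWithinAt.tendsto
    have hhalf : Tendsto (fun m : ℝ => m / 2) (𝓝[>] 0) (𝓝 0) :=
      h1.mono_right nhdsWithin_le_nhds
    simpa using hhalf.mul hcont
  have heq : ∀ᶠ m in 𝓝[>] (0:ℝ),
      m / 2 * Real.log (m / 2 / (m / 2 + ρ))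
        = m / 2 * Real.log (m / 2) - m / 2 * Real.log (m / 2 + ρ) := by
    filter_upwards [self_mem_nhdsWithin] with m (hm : 0 < m)
    rw [Real.log_div (by positivity) (by positivity)]
    ring
  exact Tendsto.congr' (heq.mono fun m hm => hm.symm) (by simpa using ha.sub hb)

lemma pSIP_tendsto_zero (ρ : ℝ) (hρ : 0 < ρ) :
    Tendsto (fun m : ℝ => pSIP m ρ) (𝓝[>] 0) (𝓝 0) := by
  have h := (Real.continuous_exp.tendsto 0).comp (tendsto_exponent ρ hρ)
  have h2 : Tendsto (fun m : ℝ =>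
      1 - Real.exp (m / 2 * Real.log (m / 2 / (m / 2 + ρ)))) (𝓝[>] 0) (𝓝 0) := by
    have := (tendsto_const_nhds : Tendsto (fun _ : ℝ => (1:ℝ)) (𝓝[>] 0) (𝓝 1)).sub h
    simpa using this
  refine h2.congr' ?_
  filter_upwards [self_mem_nhdsWithin] with m (hm : 0 < m)
  exact (pSIP_eq hρ hm).symm

lemma aux_exp_slope {α : Type*} {l : Filter α} {t : α → ℝ} (ht : Tendsto t l (𝓝 0))
    (htne : ∀ᶠ x in l, t x ≠ 0) :
    Tendsto (fun x => (Real.exp (t x) - 1) / t x) l (𝓝 1) := by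
  have hs := hasDerivAt_iff_tendsto_slope.mp (Real.hasDerivAt_exp 0)
  have ht' : Tendsto t l (𝓝[≠] 0) :=
    tendsto_nhdsWithin_of_tendsto_nhds_of_eventually_within t ht htne
  have h2 := hs.comp ht'
  rw [Real.exp_zero] at h2
  exact h2.congr fun x => by simp [Function.comp, slope_def_field, Real.exp_zero]

lemma aux_log_quot (ρ : ℝ) (hρ : 0 < ρ) :
    Tendsto (fun m : ℝ => (Real.log 2 + Real.log (m / 2 + ρ)) / Real.log m)
      (𝓝[>] 0) (𝓝 0) := by
  have hnum : Tendsto (fun m : ℝ => Real.log 2 + Real.log (m / 2 + ρ)) (𝓝[>] 0)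
      (𝓝 (Real.log 2 + Real.log ρ)) := by
    have : ContinuousAt (fun m : ℝ => Real.log 2 + Real.log (m / 2 + ρ)) 0 := by
      apply ContinuousAt.add continuousAt_const
      apply (Real.continuousAt_log (by simpa using hρ.ne')).comp
      fun_prop
    simpa using this.continuousWithinAt.tendsto
  have hden : Tendsto (fun m : ℝ => -Real.log m) (𝓝[>] 0) atTop :=
    tendsto_neg_atBot_atTop.comp Real.tendsto_log_nhdsGT_zero
  have h := hnum.div_atTop hden
  have h2 := h.neg
  rw [neg_zero] at h2
  refine h2.congr fun m => ?_
  rw [div_neg, neg_neg]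

lemma aux_id (E a L lc lr : ℝ) (ha : a ≠ 0) (hL : L ≠ 0) (h : L - lc - lr ≠ 0) :
    (1 - E) / (-a * L) = (E - 1) / (a * (L - lc - lr)) * (1 - (lc + lr) / L) := by
  field_simp
  ring

lemma pSIP_asymp (ρ : ℝ) (hρ : 0 < ρ) :
    Tendsto (fun m : ℝ => pSIP m ρ / (-(m / 2) * Real.log m)) (𝓝[>] 0) (𝓝 1) := by
  set t : ℝ → ℝ := fun m => m / 2 * Real.log (m / 2 / (m / 2 + ρ)) with ht_def
  have htne : ∀ᶠ m in 𝓝[>] (0:ℝ), t m ≠ 0 := by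
    filter_upwards [self_mem_nhdsWithin] with m (hm : 0 < m)
    exact (pSIP_exponent_neg hρ hm).ne
  have F1 : Tendsto (fun m => (Real.exp (t m) - 1) / t m) (𝓝[>] 0) (𝓝 1) :=
    aux_exp_slope (tendsto_exponent ρ hρ) htne
  have F2 : Tendsto (fun m : ℝ => 1 - (Real.log 2 + Real.log (m / 2 + ρ)) / Real.log m)
      (𝓝[>] 0) (𝓝 1) := by
    have := (tendsto_const_nhds : Tendsto (fun _ : ℝ => (1:ℝ)) (𝓝[>] 0) (𝓝 1)).sub
      (aux_log_quot ρ hρ)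
    simpa using this
  have hmain := F1.mul F2
  rw [mul_one] at hmain
  refine hmain.congr' ?_
  have hm1 : ∀ᶠ m in 𝓝[>] (0:ℝ), m < 1 := by
    filter_upwards [Ioo_mem_nhdsGT_of_mem (Set.left_mem_Ico.mpr one_pos)] with m hm
    exact hm.2
  filter_upwards [self_mem_nhdsWithin, hm1] with m (hm : 0 < m) hm1
  have h1 : (0:ℝ) < m / 2 + ρ := by positivity
  have hL : Real.log m ≠ 0 := ne_of_lt (Real.log_neg hm hm1)
  have hlog : Real.log (m / 2 / (m / 2 + ρ))
      = Real.log m - Real.log 2 - Real.log (m / 2 + ρ) := by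
    rw [Real.log_div (by positivity) h1.ne', Real.log_div hm.ne' two_ne_zero]
  have ht : t m = m / 2 * (Real.log m - Real.log 2 - Real.log (m / 2 + ρ)) := by
    simp only [ht_def]; rw [hlog]
  have htm := (pSIP_exponent_neg hρ hm).ne
  rw [hlog] at htm
  have hsub : Real.log m - Real.log 2 - Real.log (m / 2 + ρ) ≠ 0 :=
    fun h => htm (by rw [h, mul_zero])
  rw [ht, pSIP_eq hρ hm, hlog]
  exact (aux_id _ _ _ _ _ (by positivity) hL hsub).symm

/-! ### Generic binomial limit lemmas -/

section aux
variable {α : Type*} {l : Filter α} {N : α → ℕ} {q : α → ℝ}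

lemma binomPMF_nonneg {K : ℕ} {q : ℝ} (h0 : 0 ≤ q) (h1 : q ≤ 1) (n : ℕ) :
    0 ≤ binomPMF K q n :=
  mul_nonneg (mul_nonneg (Nat.cast_nonneg _) (pow_nonneg h0 n)) (pow_nonneg (by linarith) _)

lemma aux_exp_one_sub_pow (hq : ∀ᶠ x in l, 0 < q x ∧ q x < 1)
    (hq0 : Tendsto q l (𝓝 0)) {c : ℝ}
    (hNq : Tendsto (fun x => (N x : ℝ) * q x) l (𝓝 c)) :
    Tendsto (fun x => (1 - q x) ^ (N x)) l (𝓝 (Real.exp (-c))) := by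
  have hslope : Tendsto (fun x => Real.log (1 - q x) / q x) l (𝓝 (-1)) := by
    have hd : HasDerivAt (fun y : ℝ => Real.log (1 - y)) (-1) 0 := by
      have h1 : HasDerivAt (fun y : ℝ => 1 - y) (-1) 0 := (hasDerivAt_id 0).const_sub 1
      have h2 := (Real.hasDerivAt_log (by norm_num : (1:ℝ) - 0 ≠ 0)).comp 0 h1
      exact h2.congr_deriv (by norm_num)
    have hs := hasDerivAt_iff_tendsto_slope.mp hd
    have hq' : Tendsto q l (𝓝[≠] 0) :=
      tendsto_nhdsWithin_of_tendsto_nhds_of_eventually_within q hq0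
        (hq.mono fun x hx => ne_of_gt hx.1)
    have := hs.comp hq'
    refine this.congr fun x => ?_
    simp [Function.comp, slope_def_field]
  have hmain : Tendsto (fun x => (N x : ℝ) * Real.log (1 - q x)) l (𝓝 (-c)) := by
    have h := hNq.mul hslope
    have hc : c * (-1) = -c := by ring
    rw [hc] at h
    refine h.congr' ?_
    filter_upwards [hq] with x hx
    have hqx : q x ≠ 0 := hx.1.ne'
    field_simp
  have := (Real.continuous_exp.tendsto _).comp hmain
  refine this.congr' ?_
  filter_upwards [hq] with x hx
  rw [Function.comp, Real.exp_nat_mul, Real.exp_log (by linarith [hx.2])]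

lemma aux_pmf_zero (hq : ∀ᶠ x in l, 0 < q x ∧ q x < 1)
    (hq0 : Tendsto q l (𝓝 0))
    (hNq : Tendsto (fun x => (N x : ℝ) * q x) l (𝓝 0)) (n : ℕ) :
    Tendsto (fun x => binomPMF (N x) (q x) n) l (𝓝 (if n = 0 then 1 else 0)) := by
  rcases Nat.eq_zero_or_pos n with rfl | hn
  · simp only [if_pos rfl]
    have := aux_exp_one_sub_pow hq hq0 hNq
    rw [neg_zero, Real.exp_zero] at this
    refine this.congr fun x => ?_
    simp [binomPMF]
  · rw [if_neg hn.ne']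
    have hub : ∀ᶠ x in l, binomPMF (N x) (q x) n ≤ ((N x : ℝ) * q x) ^ n := by
      filter_upwards [hq] with x hx
      have h1 : (0:ℝ) ≤ 1 - q x := by linarith [hx.2]
      have h2 : (1 - q x) ^ (N x - n) ≤ 1 :=
        pow_le_one₀ h1 (by linarith [hx.2])
      calc binomPMF (N x) (q x) n
          ≤ ((N x).choose n : ℝ) * q x ^ n * 1 := by
            unfold binomPMF
            apply mul_le_mul_of_nonneg_left h2
            exact mul_nonneg (Nat.cast_nonneg _) (pow_nonneg hx.1.le n)
        _ ≤ ((N x : ℝ)) ^ n * q x ^ n := by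
            rw [mul_one]
            apply mul_le_mul_of_nonneg_right _ (pow_nonneg hx.1.le n)
            exact_mod_cast Nat.choose_le_pow (N x) n
        _ = ((N x : ℝ) * q x) ^ n := (mul_pow _ _ _).symm
    have hlb : ∀ᶠ x in l, 0 ≤ binomPMF (N x) (q x) n := by
      filter_upwards [hq] with x hx
      exact binomPMF_nonneg hx.1.le hx.2.le n
    have hpow : Tendsto (fun x => ((N x : ℝ) * q x) ^ n) l (𝓝 0) := by
      have := hNq.pow n
      rwa [zero_pow hn.ne'] at this
    exact squeeze_zero' hlb hub hpow

lemma aux_pmf_poisson (hq : ∀ᶠ x in l, 0 < q x ∧ q x < 1)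
    (hq0 : Tendsto q l (𝓝 0)) {c : ℝ}
    (hNq : Tendsto (fun x => (N x : ℝ) * q x) l (𝓝 c))
    (hN : Tendsto (fun x => (N x : ℝ)) l atTop) (n : ℕ) :
    Tendsto (fun x => binomPMF (N x) (q x) n) l
      (𝓝 (Real.exp (-c) * c ^ n / n.factorial)) := by
  have hNn : ∀ᶠ x in l, (n : ℝ) ≤ (N x : ℝ) := hN.eventually_ge_atTop _
  have T1 : Tendsto (fun x => ∏ i ∈ Finset.range n, (((N x : ℝ) - i) * q x)) l
      (𝓝 (c ^ n)) := by
    have : Tendsto (fun x => ∏ i ∈ Finset.range n, (((N x : ℝ) - i) * q x)) l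
        (𝓝 (∏ _i ∈ Finset.range n, c)) := by
      apply tendsto_finset_prod
      intro i _
      have : Tendsto (fun x => (N x : ℝ) * q x - (i : ℝ) * q x) l (𝓝 (c - (i : ℝ) * 0)) :=
        hNq.sub (hq0.const_mul _)
      simp only [mul_zero, sub_zero] at this
      exact this.congr fun x => by ring
    simpa using this
  have T2 : Tendsto (fun x => (1 - q x) ^ (N x)) l (𝓝 (Real.exp (-c))) :=
    aux_exp_one_sub_pow hq hq0 hNq
  have T3 : Tendsto (fun x => (1 - q x) ^ n) l (𝓝 1) := by
    have : Tendsto (fun x => (1 - q x) ^ n) l (𝓝 ((1 - 0) ^ n)) :=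
      (tendsto_const_nhds.sub hq0).pow n
    simpa using this
  have hmain := (T1.div_const (n.factorial : ℝ)).mul (T2.div T3 one_ne_zero)
  have hlim : c ^ n / (n.factorial : ℝ) * (Real.exp (-c) / 1)
      = Real.exp (-c) * c ^ n / n.factorial := by ring
  rw [hlim] at hmain
  refine hmain.congr' ?_
  filter_upwards [hq, hNn] with x hx hxn
  have hn_le : n ≤ N x := by exact_mod_cast hxn
  have h1q : (0:ℝ) < 1 - q x := by linarith [hx.2]
  have hchoose : ((N x).choose n : ℝ) * q x ^ n
      = (∏ i ∈ Finset.range n, (((N x : ℝ) - i) * q x)) / n.factorial := by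
    have hdesc : ((N x).descFactorial n : ℝ) = ∏ i ∈ Finset.range n, ((N x : ℝ) - i) := by
      rw [Nat.descFactorial_eq_prod_range, Nat.cast_prod]
      apply Finset.prod_congr rfl
      intro i hi
      have : i ≤ N x := le_trans (Finset.mem_range.mp hi).le hn_le
      exact Nat.cast_sub this
    have h2 : ((N x).descFactorial n : ℝ) = (n.factorial : ℝ) * ((N x).choose n : ℝ) := by
      exact_mod_cast congrArg (Nat.cast (R := ℝ))
        (Nat.descFactorial_eq_factorial_mul_choose (N x) n)
    rw [Finset.prod_mul_distrib, Finset.prod_const, Finset.card_range, ← hdesc, h2]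
    field_simp
  have hpow : ((1:ℝ) - q x) ^ (N x - n) = (1 - q x) ^ (N x) / (1 - q x) ^ n := by
    rw [pow_sub₀ _ h1q.ne' hn_le, div_eq_mul_inv]
  simp only [Pi.div_apply]
  unfold binomPMF
  rw [hpow, hchoose]

end aux

/-! ### Variance and Chebyshev -/

lemma binom_variance (K : ℕ) (q : ℝ) :
    ∑ n ∈ Finset.range (K + 1), ((n : ℝ) - K * q) ^ 2 * binomPMF K q n
      = K * q * (1 - q) := by
  have h := congrArg (Polynomial.eval q) (bernsteinPolynomial.variance (R := ℝ) K)
  simp only [Polynomial.eval_finset_sum, Polynomial.eval_mul, Polynomial.eval_pow,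
    Polynomial.eval_sub, Polynomial.eval_smul, Polynomial.eval_X, Polynomial.eval_one,
    Polynomial.eval_natCast, bernsteinPolynomial, smul_eq_mul, nsmul_eq_mul] at h
  rw [← h]
  apply Finset.sum_congr rfl
  intro n _
  unfold binomPMF
  ring

lemma chebyshev_sum_le (K : ℕ) (q ε : ℝ) (hq0 : 0 < q) (hq1 : q < 1) (hε : 0 < ε)
    (hK : 0 < (K : ℝ) * q) :
    ∑ n ∈ Finset.range (K + 1),
        (if ε < |(n : ℝ) / ((K : ℝ) * q) - 1| then binomPMF K q n else 0)
      ≤ 1 / (ε ^ 2 * ((K : ℝ) * q)) := by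
  have key : ∑ n ∈ Finset.range (K + 1),
      (if ε < |(n : ℝ) / ((K : ℝ) * q) - 1| then binomPMF K q n else 0)
      ≤ ∑ n ∈ Finset.range (K + 1),
        ((n : ℝ) - K * q) ^ 2 * binomPMF K q n / (ε ^ 2 * ((K : ℝ) * q) ^ 2) := by
    apply Finset.sum_le_sum
    intro n _
    have hpmf : 0 ≤ binomPMF K q n := binomPMF_nonneg hq0.le hq1.le n
    by_cases hc : ε < |(n : ℝ) / ((K : ℝ) * q) - 1|
    · rw [if_pos hc]
      have habs : |(n : ℝ) / ((K : ℝ) * q) - 1| = |(n : ℝ) - K * q| / ((K : ℝ) * q) := by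
        rw [div_sub_one hK.ne', abs_div, abs_of_pos hK]
      rw [habs, lt_div_iff₀ hK] at hc
      have hsq : (ε * ((K : ℝ) * q)) ^ 2 ≤ ((n : ℝ) - K * q) ^ 2 := by
        have := pow_le_pow_left₀ (by positivity) hc.le 2
        rwa [sq_abs] at this
      rw [le_div_iff₀ (by positivity)]
      calc binomPMF K q n * (ε ^ 2 * ((K : ℝ) * q) ^ 2)
          = (ε * ((K : ℝ) * q)) ^ 2 * binomPMF K q n := by ring
        _ ≤ ((n : ℝ) - K * q) ^ 2 * binomPMF K q n :=
            mul_le_mul_of_nonneg_right hsq hpmf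
    · rw [if_neg hc]
      positivity
  calc _ ≤ _ := key
    _ = (K * q * (1 - q)) / (ε ^ 2 * ((K : ℝ) * q) ^ 2) := by
        rw [← Finset.sum_div, binom_variance]
    _ ≤ (K * q * 1) / (ε ^ 2 * ((K : ℝ) * q) ^ 2) := by
        gcongr
        linarith
    _ = 1 / (ε ^ 2 * ((K : ℝ) * q)) := by
        field_simp

section lln
variable {α : Type*} {l : Filter α} {N : α → ℕ} {q : α → ℝ}

lemma aux_lln (hq : ∀ᶠ x in l, 0 < q x ∧ q x < 1)
    (hNq : Tendsto (fun x => (N x : ℝ) * q x) l atTop)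
    {ε : ℝ} (hε : 0 < ε) :
    Tendsto (fun x => ∑ n ∈ Finset.range (N x + 1),
        if ε < |(n : ℝ) / ((N x : ℝ) * q x) - 1| then binomPMF (N x) (q x) n else 0)
      l (𝓝 0) := by
  have hKpos : ∀ᶠ x in l, 0 < (N x : ℝ) * q x := hNq.eventually_gt_atTop 0
  apply squeeze_zero'
  · filter_upwards [hq] with x hx
    apply Finset.sum_nonneg
    intro n _
    split
    · exact binomPMF_nonneg hx.1.le hx.2.le n
    · exact le_rfl
  · filter_upwards [hq, hKpos] with x hx hKx
    exact chebyshev_sum_le (N x) (q x) ε hx.1 hx.2 hε hKx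
  · have hlim : Tendsto (fun x => ε ^ 2 * ((N x : ℝ) * q x)) l atTop :=
      Tendsto.const_mul_atTop (by positivity : (0:ℝ) < ε ^ 2) hNq
    exact Tendsto.div_atTop tendsto_const_nhds hlim

lemma aux_lln_tail (hq : ∀ᶠ x in l, 0 < q x ∧ q x < 1)
    (hNq : Tendsto (fun x => (N x : ℝ) * q x) l atTop) (n : ℕ) :
    Tendsto (fun x => ∑ j ∈ Finset.range (n + 1), binomPMF (N x) (q x) j) l (𝓝 0) := by
  have hbig : ∀ᶠ x in l, (2 * ((n : ℝ) + 1)) < (N x : ℝ) * q x :=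
    hNq.eventually_gt_atTop _
  apply squeeze_zero' (g := fun x => ∑ j ∈ Finset.range (N x + 1),
      if (1:ℝ)/2 < |(j : ℝ) / ((N x : ℝ) * q x) - 1| then binomPMF (N x) (q x) j else 0)
  · filter_upwards [hq] with x hx
    exact Finset.sum_nonneg fun j _ => binomPMF_nonneg hx.1.le hx.2.le j
  · filter_upwards [hq, hbig] with x hx hbx
    have hKq : (0:ℝ) < (N x : ℝ) * q x := lt_trans (by positivity) hbx
    have hKn : n + 1 ≤ N x := by
      have h1 : (N x : ℝ) * q x ≤ (N x : ℝ) := by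
        nlinarith [hx.2, (Nat.cast_nonneg (N x) : (0:ℝ) ≤ (N x : ℝ))]
      have : ((n : ℝ) + 1) ≤ (N x : ℝ) := by nlinarith
      exact_mod_cast this
    have hsub : Finset.range (n + 1) ⊆ Finset.range (N x + 1) :=
      Finset.range_subset_range.mpr (by omega)
    calc ∑ j ∈ Finset.range (n + 1), binomPMF (N x) (q x) j
        = ∑ j ∈ Finset.range (n + 1),
            (if (1:ℝ)/2 < |(j : ℝ) / ((N x : ℝ) * q x) - 1| then
              binomPMF (N x) (q x) j else 0) := by
          apply Finset.sum_congr rfl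
          intro j hj
          rw [if_pos]
          have hjn : (j : ℝ) ≤ n := by
            exact_mod_cast Nat.lt_succ_iff.mp (Finset.mem_range.mp hj)
          have hdiv : (j : ℝ) / ((N x : ℝ) * q x) < 1/2 := by
            rw [div_lt_iff₀ hKq]
            nlinarith
          have hnn : (0:ℝ) ≤ (j : ℝ) / ((N x : ℝ) * q x) := by positivity
          rw [abs_sub_comm, abs_of_pos (by linarith)]
          linarith
      _ ≤ _ := by
          apply Finset.sum_le_sum_of_subset_of_nonneg hsub
          intro j _ _
          split
          · exact binomPMF_nonneg hx.1.le hx.2.le j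
          · exact le_rfl
  · exact aux_lln hq hNq (by norm_num)

end lln

/-! ### Translating the `K/κ` hypothesis into `K·p` asymptotics -/

lemma aux_kp (k p m L : ℝ) (hm : m ≠ 0) (hL : L ≠ 0) :
    k * p = k / (-1 / (m * L)) * (p / (-(m / 2) * L)) * (1 / 2) := by
  field_simp

lemma aux_kp_eventually (ρ : ℝ) (hρ : 0 < ρ) (K : ℝ → ℕ) :
    ∀ᶠ m in 𝓝[>] (0:ℝ), (K m : ℝ) * pSIP m ρ
      = (K m : ℝ) / kappaScale m * (pSIP m ρ / (-(m / 2) * Real.log m)) * (1 / 2) := by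
  have hm1 : ∀ᶠ m in 𝓝[>] (0:ℝ), m < 1 := by
    filter_upwards [Ioo_mem_nhdsGT_of_mem (Set.left_mem_Ico.mpr one_pos)] with m hm
    exact hm.2
  filter_upwards [self_mem_nhdsWithin, hm1] with m (hm : 0 < m) hm1
  exact aux_kp _ _ _ _ hm.ne' (ne_of_lt (Real.log_neg hm hm1))

/-- **Number of non-empty sites as `m → 0`**: `Δ_{K_m} ∼ Binomial(K_m, p_m)` satisfies:
(i) if `K_m/κ_m → 0` then `Δ_{K_m} → 0` in distribution; (ii) if `K_m/κ_m → δ ∈ (0,∞)`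
then `Δ_{K_m} → Poisson(δ/2)` in distribution; (iii) if `K_m/κ_m → ∞` then
`Δ_{K_m}/(K_m p_m) → 1` in probability and `Δ_{K_m} → ∞` in distribution. Moreover
`p_m = −(m/2)(log m)(1+o(1))`. -/
theorem sip_nonempty_sites_scaling
    (ρ : ℝ) (hρ : 0 < ρ) (K : ℝ → ℕ) :
    -- asymptotics of `p_m`
    Tendsto (fun m : ℝ => pSIP m ρ / (-(m / 2) * Real.log m)) (𝓝[>] 0) (𝓝 1) ∧
    -- (i) `K_m ≪ κ_m`
    ((Tendsto (fun m : ℝ => (K m : ℝ) / kappaScale m) (𝓝[>] 0) (𝓝 0)) →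
      ∀ n : ℕ,
        Tendsto (fun m : ℝ => binomPMF (K m) (pSIP m ρ) n) (𝓝[>] 0)
          (𝓝 (if n = 0 then 1 else 0))) ∧
    -- (ii) `K_m/κ_m → δ ∈ (0,∞)`: Poisson(δ/2) limit
    (∀ δ : ℝ, 0 < δ →
      (Tendsto (fun m : ℝ => (K m : ℝ) / kappaScale m) (𝓝[>] 0) (𝓝 δ)) →
      ∀ n : ℕ,
        Tendsto (fun m : ℝ => binomPMF (K m) (pSIP m ρ) n) (𝓝[>] 0)
          (𝓝 (Real.exp (-(δ / 2)) * (δ / 2) ^ n / n.factorial))) ∧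
    -- (iii) `K_m ≫ κ_m`: law of large numbers and escape to infinity
    ((Tendsto (fun m : ℝ => (K m : ℝ) / kappaScale m) (𝓝[>] 0) atTop) →
      (∀ ε : ℝ, 0 < ε →
        Tendsto
          (fun m : ℝ => ∑ n ∈ Finset.range (K m + 1),
            if ε < |(n : ℝ) / ((K m : ℝ) * pSIP m ρ) - 1| then
              binomPMF (K m) (pSIP m ρ) n else 0)
          (𝓝[>] 0) (𝓝 0)) ∧
      (∀ n : ℕ,
        Tendsto (fun m : ℝ => ∑ j ∈ Finset.range (n + 1), binomPMF (K m) (pSIP m ρ) j)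
          (𝓝[>] 0) (𝓝 0))) := by
  have hq : ∀ᶠ m in 𝓝[>] (0:ℝ), 0 < pSIP m ρ ∧ pSIP m ρ < 1 := by
    filter_upwards [self_mem_nhdsWithin] with m (hm : 0 < m)
    exact ⟨pSIP_pos hρ hm, pSIP_lt_one hρ hm⟩
  have hq0 : Tendsto (fun m : ℝ => pSIP m ρ) (𝓝[>] 0) (𝓝 0) := pSIP_tendsto_zero ρ hρ
  have hr : Tendsto (fun m : ℝ => pSIP m ρ / (-(m / 2) * Real.log m)) (𝓝[>] 0) (𝓝 1) :=
    pSIP_asymp ρ hρ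
  have hkp := aux_kp_eventually ρ hρ K
  refine ⟨hr, ?_, ?_, ?_⟩
  · -- case (i)
    intro h0 n
    have hKp : Tendsto (fun m : ℝ => (K m : ℝ) * pSIP m ρ) (𝓝[>] 0) (𝓝 0) := by
      have := (h0.mul hr).mul_const (1/2 : ℝ)
      rw [zero_mul, zero_mul] at this
      exact Tendsto.congr' (hkp.mono fun m hm => hm.symm) this
    exact aux_pmf_zero hq hq0 hKp n
  · -- case (ii)
    intro δ hδ hδlim n
    have hKp : Tendsto (fun m : ℝ => (K m : ℝ) * pSIP m ρ) (𝓝[>] 0) (𝓝 (δ / 2)) := by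
      have := (hδlim.mul hr).mul_const (1/2 : ℝ)
      rw [mul_one] at this
      have h2 : δ * (1/2 : ℝ) = δ / 2 := by ring
      rw [h2] at this
      exact Tendsto.congr' (hkp.mono fun m hm => hm.symm) this
    have hN : Tendsto (fun m : ℝ => (K m : ℝ)) (𝓝[>] 0) atTop := by
      have hinv : Tendsto (fun m : ℝ => (pSIP m ρ)⁻¹) (𝓝[>] 0) atTop := by
        apply tendsto_inv_nhdsGT_zero.comp
        exact tendsto_nhdsWithin_of_tendsto_nhds_of_eventually_within _ hq0
          (hq.mono fun m hm => hm.1)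
      have := Tendsto.pos_mul_atTop (half_pos hδ) hKp hinv
      refine this.congr' ?_
      filter_upwards [hq] with m hm
      rw [mul_assoc, mul_inv_cancel₀ hm.1.ne', mul_one]
    exact aux_pmf_poisson hq hq0 hKp hN n
  · -- case (iii)
    intro hinf
    have hKp : Tendsto (fun m : ℝ => (K m : ℝ) * pSIP m ρ) (𝓝[>] 0) atTop := by
      have hg : Tendsto (fun m : ℝ => pSIP m ρ / (-(m / 2) * Real.log m) * (1 / 2))
          (𝓝[>] 0) (𝓝 (1 * (1/2 : ℝ))) := hr.mul_const _
      have := Tendsto.atTop_mul_pos (by norm_num : (0:ℝ) < 1 * (1/2)) hinf hg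
      refine Tendsto.congr' ?_ this
      filter_upwards [hkp] with m hm
      rw [← mul_assoc]
      exact hm.symm
    exact ⟨fun ε hε => aux_lln hq hKp hε, fun n => aux_lln_tail hq hKp n⟩
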